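/- Let (M, φ, ξ_α, η^α, g) be a Lorentzian g.f.f-manifold, dim M = 2n+s, s ≥ 2, with ξ_1 timelike. Fix p ∈ M, and let F : (T_pM)^4 → ℝ be a curvature-like map satisfying F(x, ξ_α, y, ξ_β) = ε_α ε_β g(φx, φy) and F(φx, φy, φz, ξ_α) = 0 for all x,y,z ∈ T_pM and all α, β. Define the (0,4)-tensors T and S by g(T(x,y)z, w) with T(X,Y)Z = g(φY,φZ)η̃(X)ξ̃ − g(φX,φZ)η̃(Y)ξ̃ − η̃(Y)η̃(Z)φ²X + η̃(X)η̃(Z)φ²Y and S(X,Y)Z = g(φX,φZ)φ²Y − g(φY,φZ)φ²X. Then F(u,y,u,y) = 0 for every degenerate plane span{u,y} with u ∈ N_φ((ξ_1)_p) and y ∈ u^⊥ ∩ Im(φ_p), if and only if F(x,y,z,w) = g(S(x,y)z, w) − g(T(x,y)z, w) for all x,y,z,w ∈ T_pM. -/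

import Mathlib

/-- A symmetric bilinear form on a real vector space is *Lorentzian* if it admits an
orthonormal basis with exactly one timelike vector. -/
def IsLorentzian {V : Type*} [AddCommGroup V] [Module ℝ V]
    (g : V →ₗ[ℝ] V →ₗ[ℝ] ℝ) : Prop :=
  ∃ (n : ℕ) (b : Module.Basis (Fin (n + 1)) ℝ V), ∀ i j,
    g (b i) (b j) = if i = j then (if i = 0 then (-1 : ℝ) else 1) else 0

lemma lorentz_posdef {n : ℕ} {V : Type*} [AddCommGroup V] [Module ℝ V]
    (g : V →ₗ[ℝ] V →ₗ[ℝ] ℝ) (b : Module.Basis (Fin (n+1)) ℝ V)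
    (hb : ∀ i j, g (b i) (b j) = if i = j then (if i = 0 then (-1:ℝ) else 1) else 0)
    (u x : V) (hu : g u u = -1) (hx : g x u = 0) (hx0 : x ≠ 0) : 0 < g x x := by
  have gform : ∀ v w : V, g v w = ∑ i, (if i = 0 then (-1:ℝ) else 1) * (b.repr v i * b.repr w i) := by
    intro v w
    conv_lhs => rw [← b.sum_repr v, ← b.sum_repr w]
    simp only [map_sum, map_smul, LinearMap.sum_apply, LinearMap.smul_apply, smul_eq_mul, hb,
      mul_ite, mul_zero, mul_neg, mul_one, Finset.sum_ite_eq, Finset.sum_ite_eq',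
      Finset.mem_univ, if_true]
    refine Finset.sum_congr rfl fun i _ => ?_
    split <;> ring
  set c : Fin (n+1) → ℝ := fun i => b.repr x i with hc
  set d : Fin (n+1) → ℝ := fun i => b.repr u i with hd
  have hsplit : ∀ (f : Fin (n+1) → ℝ),
      (∑ i, (if i = 0 then (-1:ℝ) else 1) * f i) = -f 0 + ∑ i ∈ Finset.univ.erase 0, f i := by
    intro f
    rw [← Finset.add_sum_erase _ (fun i => (if i = 0 then (-1:ℝ) else 1) * f i) (Finset.mem_univ 0)]
    have h2 : ∑ i ∈ Finset.univ.erase 0, (if i = 0 then (-1:ℝ) else 1) * f i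
        = ∑ i ∈ Finset.univ.erase 0, f i :=
      Finset.sum_congr rfl fun i hi => by rw [if_neg (Finset.ne_of_mem_erase hi), one_mul]
    rw [h2, if_pos rfl, neg_one_mul]
  have hA : -(c 0 * d 0) + ∑ i ∈ Finset.univ.erase 0, c i * d i = 0 := by
    have h := hx; rw [gform, hsplit (fun i => c i * d i)] at h; exact h
  have hB : -(d 0 * d 0) + ∑ i ∈ Finset.univ.erase 0, d i * d i = -1 := by
    have h := hu; rw [gform, hsplit (fun i => d i * d i)] at h; exact h
  have hgoal : g x x = -(c 0 * c 0) + ∑ i ∈ Finset.univ.erase 0, c i * c i := by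
    rw [gform, hsplit (fun i => c i * c i)]
  rw [hgoal]
  have hsq : ∀ (f : Fin (n+1) → ℝ), (∑ i ∈ Finset.univ.erase 0, f i * f i)
      = ∑ i ∈ Finset.univ.erase 0, f i ^ 2 := by
    intro f; refine Finset.sum_congr rfl fun i _ => (sq (f i)).symm
  have hScc : (0:ℝ) ≤ ∑ i ∈ Finset.univ.erase 0, c i * c i :=
    Finset.sum_nonneg fun i _ => mul_self_nonneg _
  have hSdd : (0:ℝ) ≤ ∑ i ∈ Finset.univ.erase 0, d i * d i :=
    Finset.sum_nonneg fun i _ => mul_self_nonneg _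
  rcases eq_or_lt_of_le hScc with h0 | hpos
  · exfalso
    have hci : ∀ i : Fin (n+1), i ≠ 0 → c i = 0 := by
      intro i hi
      have := (Finset.sum_eq_zero_iff_of_nonneg (fun i _ => mul_self_nonneg (c i))).mp h0.symm
      exact mul_self_eq_zero.mp (this i (Finset.mem_erase.mpr ⟨hi, Finset.mem_univ i⟩))
    have hScd : ∑ i ∈ Finset.univ.erase 0, c i * d i = 0 :=
      Finset.sum_eq_zero fun i hi => by rw [hci i (Finset.ne_of_mem_erase hi), zero_mul]
    have hc0 : c 0 * d 0 = 0 := by linarith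
    have hd0 : d 0 * d 0 ≥ 1 := by linarith
    have hc00 : c 0 = 0 := by
      rcases mul_eq_zero.mp hc0 with h | h
      · exact h
      · nlinarith
    apply hx0
    have hrepr : b.repr x = 0 := by
      ext i
      rcases eq_or_ne i 0 with hi | hi
      · rw [hi]; exact hc00
      · exact hci i hi
    exact b.repr.map_eq_zero_iff.mp hrepr
  · have hCS := Finset.sum_mul_sq_le_sq_mul_sq (Finset.univ.erase 0) c d
    rw [← hsq c, ← hsq d] at hCS
    have hScd : (∑ i ∈ Finset.univ.erase 0, c i * d i) = c 0 * d 0 := by linarith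
    have hdd : (∑ i ∈ Finset.univ.erase 0, d i * d i) = d 0 * d 0 - 1 := by linarith
    rw [hScd, hdd] at hCS
    nlinarith [hCS, hpos, mul_self_nonneg (d 0)]



set_option maxHeartbeats 3200000 in
/-- On (the tangent space at a point `p` of) a Lorentzian `g.f.f`-manifold with
`s = s₀ + 2 ≥ 2` characteristic vector fields (the timelike `ξ_1` indexed by `0`),
a curvature-like map `F` with `F(x,ξ_α,y,ξ_β) = ε_α ε_β g(φx,φy)` and
`F(φx,φy,φz,ξ_α) = 0` vanishes on every degenerate plane `span{u,y}` with
`u ∈ N_φ(ξ_1)` and `y ∈ u^⊥ ∩ Im(φ_p)` iff `F = g(S(·,·)·,·) − g(T(·,·)·,·)`,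
where `T(X,Y)Z = g(φY,φZ)η̃(X)ξ̃ − g(φX,φZ)η̃(Y)ξ̃ − η̃(Y)η̃(Z)φ²X + η̃(X)η̃(Z)φ²Y`
and `S(X,Y)Z = g(φX,φZ)φ²Y − g(φY,φZ)φ²X`, with `ξ̃ = ∑ ξ_α`, `η̃ = ∑ ε_α η^α`. -/
theorem curvatureLike_gff_characterization
    {V : Type*} [AddCommGroup V] [Module ℝ V] [FiniteDimensional ℝ V]
    (g : V →ₗ[ℝ] V →ₗ[ℝ] ℝ) (hgsymm : ∀ x y, g x y = g y x)
    (hgL : IsLorentzian g)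
    {s₀ : ℕ}
    (φ : V →ₗ[ℝ] V) (ξ : Fin (s₀ + 2) → V) (η : Fin (s₀ + 2) → V →ₗ[ℝ] ℝ)
    (ε : Fin (s₀ + 2) → ℝ)
    (hphi2 : ∀ x, φ (φ x) = -x + ∑ α, η α x • ξ α)
    (hηξ : ∀ α β, η α (ξ β) = if α = β then 1 else 0)
    (hφξ : ∀ α, φ (ξ α) = 0) (hηφ : ∀ α x, η α (φ x) = 0)
    (hε0 : ε 0 = -1) (hεpos : ∀ α, α ≠ 0 → ε α = 1)
    (hgξξ : ∀ α β, g (ξ α) (ξ β) = if α = β then ε α else 0)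
    (hgxi : ∀ α (x : V), g x (ξ α) = ε α * η α x)
    (hmetriccompat : ∀ x y, g (φ x) (φ y) = g x y - ∑ α, ε α * (η α x * η α y))
    (F : V →ₗ[ℝ] V →ₗ[ℝ] V →ₗ[ℝ] V →ₗ[ℝ] ℝ)
    -- curvature symmetries
    (hpair : ∀ x y z w, F x y z w = F z w x y)
    (hanti1 : ∀ x y z w, F x y z w = - F y x z w)
    (hanti2 : ∀ x y z w, F x y z w = - F x y w z)
    (hbianchi : ∀ x y z w, F x y z w + F y z x w + F z x y w = 0)
    -- the two structural conditions on `F`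
    (hF1 : ∀ (x y : V) (α β), F x (ξ α) y (ξ β) = ε α * ε β * g (φ x) (φ y))
    (hF2 : ∀ (x y z : V) (α), F (φ x) (φ y) (φ z) (ξ α) = 0) :
    -- (a) `F` vanishes on degenerate planes `span{u,y}`, `u ∈ N_φ(ξ_1)`, `y ∈ u^⊥ ∩ Im φ`
    (∀ x : V, (∀ γ, η γ x = 0) → g x x = 1 →
      ∀ y : V, g (ξ 0 + x) y = 0 → (∀ γ, η γ y = 0) →
        F (ξ 0 + x) y (ξ 0 + x) y = 0) ↔
    -- (b) `F(x,y,z,w) = g(S(x,y)z,w) − g(T(x,y)z,w)`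
    (∀ x y z w : V,
      F x y z w =
        g (g (φ x) (φ z) • φ (φ y) - g (φ y) (φ z) • φ (φ x)) w
        - g (((∑ β, ε β * η β x) * g (φ y) (φ z)) • (∑ α, ξ α)
            - ((∑ β, ε β * η β y) * g (φ x) (φ z)) • (∑ α, ξ α)
            - ((∑ β, ε β * η β y) * (∑ β, ε β * η β z)) • φ (φ x)
            + ((∑ β, ε β * η β x) * (∑ β, ε β * η β z)) • φ (φ y)) w) := by
  classical
  set e : V →ₗ[ℝ] ℝ := ∑ β, ε β • η β with he_def
  have he : ∀ x : V, e x = ∑ β, ε β * η β x := by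
    intro x
    simp [he_def, LinearMap.sum_apply, LinearMap.smul_apply, smul_eq_mul]
  have hεsq : ∀ α, ε α * ε α = 1 := by
    intro α
    rcases eq_or_ne α 0 with h | h
    · rw [h, hε0]; norm_num
    · rw [hεpos α h]; norm_num
  have hgξR : ∀ α (x : V), g (ξ α) x = ε α * η α x := fun α x => by
    rw [hgsymm]; exact hgxi α x
  have hgpp : ∀ x w : V, g (φ (φ x)) w = - g (φ x) (φ w) := by
    intro x w
    rw [hphi2]
    have h1 : g (-x + ∑ α, η α x • ξ α) w = -(g x w) + ∑ α, η α x * (ε α * η α w) := by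
      simp [map_add, map_neg, map_sum, map_smul, LinearMap.add_apply, LinearMap.neg_apply,
        LinearMap.sum_apply, LinearMap.smul_apply, smul_eq_mul, hgξR]
    rw [h1, hmetriccompat]
    have hs : ∑ α, η α x * (ε α * η α w) = ∑ α, ε α * (η α x * η α w) :=
      Finset.sum_congr rfl fun α _ => by ring
    rw [hs]; ring
  have hgtilde : ∀ w : V, g (∑ α, ξ α) w = e w := by
    intro w
    rw [he, map_sum, LinearMap.sum_apply]
    exact Finset.sum_congr rfl fun α _ => hgξR α w
  have heξ : ∀ α, e (ξ α) = ε α := by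
    intro α
    rw [he]
    simp [hηξ, mul_ite, mul_one, mul_zero, Finset.sum_ite_eq', Finset.mem_univ]
  have heφ : ∀ x, e (φ x) = 0 := by
    intro x; rw [he]; simp [hηφ]
  have heW : ∀ x : V, (∀ γ, η γ x = 0) → e x = 0 := by
    intro x hx; rw [he]; simp [hx]
  have hgW : ∀ x y : V, (∀ γ, η γ x = 0) → g (φ x) (φ y) = g x y := by
    intro x y hx; rw [hmetriccompat]; simp [hx]
  set B : V → V → ℝ := fun x y => g (φ x) (φ y) - e x * e y with hB
  have hBsymm : ∀ x y, B x y = B y x := by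
    intro x y; simp only [hB]; rw [hgsymm]; ring
  have hBξ2 : ∀ (x : V) α, B x (ξ α) = -(e x * ε α) := by
    intro x α
    simp only [hB, hφξ, map_zero, heξ]
    ring
  have hBξ1 : ∀ α (y : V), B (ξ α) y = -(ε α * e y) := by
    intro α y
    simp only [hB, hφξ, map_zero, LinearMap.zero_apply, heξ]
    ring
  have hBgW : ∀ x y : V, (∀ γ, η γ x = 0) → B x y = g x y := by
    intro x y hx
    simp only [hB, heW x hx, hgW x y hx]
    ring
  have hBadd1 : ∀ u v z : V, B (u + v) z = B u z + B v z := by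
    intro u v z
    simp only [hB, map_add, LinearMap.add_apply]
    ring
  have hBadd2 : ∀ z u v : V, B z (u + v) = B z u + B z v := by
    intro z u v
    simp only [hB, map_add]
    ring
  have hBsmul1 : ∀ (r : ℝ) (u z : V), B (r • u) z = r * B u z := by
    intro r u z
    simp only [hB, map_smul, LinearMap.smul_apply, smul_eq_mul]
    ring
  have hBsmul2 : ∀ (r : ℝ) (z u : V), B z (r • u) = r * B z u := by
    intro r z u
    simp only [hB, map_smul, smul_eq_mul]
    ring
  set G : V → V → V → V → ℝ := fun x y z w => B y z * B x w - B x z * B y w with hG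
  set Hm : V → V → V → V → ℝ := fun x y z w => F x y z w - G x y z w with hHm
  have hRHS : ∀ x y z w : V,
      g (g (φ x) (φ z) • φ (φ y) - g (φ y) (φ z) • φ (φ x)) w
        - g (((∑ β, ε β * η β x) * g (φ y) (φ z)) • (∑ α, ξ α)
            - ((∑ β, ε β * η β y) * g (φ x) (φ z)) • (∑ α, ξ α)
            - ((∑ β, ε β * η β y) * (∑ β, ε β * η β z)) • φ (φ x)
            + ((∑ β, ε β * η β x) * (∑ β, ε β * η β z)) • φ (φ y)) w
      = G x y z w := by
    intro x y z w
    rw [← he x, ← he y, ← he z]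
    simp only [map_sub, map_add, map_smul, LinearMap.sub_apply, LinearMap.add_apply,
      LinearMap.smul_apply, smul_eq_mul]
    rw [hgpp x w, hgpp y w, hgtilde w]
    simp only [hG, hB]
    ring
  -- symmetries of Hm
  have hmpair : ∀ x y z w, Hm x y z w = Hm z w x y := by
    intro x y z w
    simp only [hHm, hG]
    rw [hpair x y z w, hBsymm w x, hBsymm z y, hBsymm z x, hBsymm w y]
    ring
  have hmanti1 : ∀ x y z w, Hm x y z w = - Hm y x z w := by
    intro x y z w
    simp only [hHm, hG]
    rw [hanti1 x y z w]; ring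
  have hmanti2 : ∀ x y z w, Hm x y z w = - Hm x y w z := by
    intro x y z w
    simp only [hHm, hG]
    rw [hanti2 x y z w]; ring
  have hmbianchi : ∀ x y z w, Hm x y z w + Hm y z x w + Hm z x y w = 0 := by
    intro x y z w
    simp only [hHm, hG]
    rw [hBsymm z x, hBsymm y x, hBsymm z y]
    linear_combination hbianchi x y z w
  -- decomposition and expansion machinery
  have hdec : ∀ v : V, v = -φ (φ v) + ∑ γ, η γ v • ξ γ := by
    intro v
    rw [hphi2 v]
    abel
  have hexpF : ∀ (f : V →ₗ[ℝ] ℝ) (v : V), f v = f (-φ (φ v)) + ∑ γ, η γ v * f (ξ γ) := by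
    intro f v
    conv_lhs => rw [hdec v]
    rw [map_add, map_sum]
    simp only [map_smul, smul_eq_mul]
  have hexp1 : ∀ a b c d : V, Hm a b c d
      = Hm (-φ (φ a)) b c d + ∑ γ, η γ a * Hm (ξ γ) b c d := by
    intro a b c d
    exact hexpF
      { toFun := fun v => Hm v b c d,
        map_add' := by
          intro u v
          simp only [hHm, hG, map_add, LinearMap.add_apply, hBadd1]
          ring,
        map_smul' := by
          intro r v
          simp only [hHm, hG, map_smul, LinearMap.smul_apply, smul_eq_mul, RingHom.id_apply,
            hBsmul1]
          ring } a
  have hexp2 : ∀ a b c d : V, Hm a b c d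
      = Hm a (-φ (φ b)) c d + ∑ γ, η γ b * Hm a (ξ γ) c d := by
    intro a b c d
    exact hexpF
      { toFun := fun v => Hm a v c d,
        map_add' := by
          intro u v
          simp only [hHm, hG, map_add, LinearMap.add_apply, hBadd1]
          ring,
        map_smul' := by
          intro r v
          simp only [hHm, hG, map_smul, LinearMap.smul_apply, smul_eq_mul, RingHom.id_apply,
            hBsmul1]
          ring } b
  have hexp3 : ∀ a b c d : V, Hm a b c d
      = Hm a b (-φ (φ c)) d + ∑ γ, η γ c * Hm a b (ξ γ) d := by
    intro a b c d
    exact hexpF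
      { toFun := fun v => Hm a b v d,
        map_add' := by
          intro u v
          simp only [hHm, hG, map_add, LinearMap.add_apply, hBadd2]
          ring,
        map_smul' := by
          intro r v
          simp only [hHm, hG, map_smul, LinearMap.smul_apply, smul_eq_mul, RingHom.id_apply,
            hBsmul2]
          ring } c
  have hexp4 : ∀ a b c d : V, Hm a b c d
      = Hm a b c (-φ (φ d)) + ∑ γ, η γ d * Hm a b c (ξ γ) := by
    intro a b c d
    exact hexpF
      { toFun := fun v => Hm a b c v,
        map_add' := by
          intro u v
          simp only [hHm, hG, map_add, hBadd2]
          ring,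
        map_smul' := by
          intro r v
          simp only [hHm, hG, map_smul, smul_eq_mul, RingHom.id_apply, hBsmul2]
          ring } d
  -- two-ξ vanishing
  have t24 : ∀ (x y : V) α β, Hm x (ξ α) y (ξ β) = 0 := by
    intro x y α β
    simp only [hHm, hG]
    rw [hF1 x y α β, hBξ1 α y, hBξ2 x β, hBξ2 (ξ α) β, heξ α]
    simp only [hB]
    ring
  have t14 : ∀ α (y z : V) β, Hm (ξ α) y z (ξ β) = 0 := by
    intro α y z β
    rw [hmanti1, t24, neg_zero]
  have t13 : ∀ α (y : V) β (w : V), Hm (ξ α) y (ξ β) w = 0 := by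
    intro α y β w
    rw [hmanti2, t14, neg_zero]
  have t23 : ∀ (x : V) α β (w : V), Hm x (ξ α) (ξ β) w = 0 := by
    intro x α β w
    rw [hmanti2, t24, neg_zero]
  have t12 : ∀ α β (z w : V), Hm (ξ α) (ξ β) z w = 0 := by
    intro α β z w
    have hbb := hmbianchi (ξ α) (ξ β) z w
    rw [t13 β z α w, t23 z α β w] at hbb
    linarith
  have t34 : ∀ (z w : V) α β, Hm z w (ξ α) (ξ β) = 0 := by
    intro z w α β
    rw [hmpair, t12]
  -- one-ξ, others W
  have hrepφ : ∀ v : V, (∀ γ, η γ v = 0) → φ (-φ v) = v := by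
    intro v hv
    rw [map_neg, hphi2]
    simp [hv]
  have u4 : ∀ (a b c : V) α, (∀ γ, η γ a = 0) → (∀ γ, η γ b = 0) → (∀ γ, η γ c = 0) →
      Hm a b c (ξ α) = 0 := by
    intro a b c α ha hb' hc'
    simp only [hHm, hG]
    have hFz : F a b c (ξ α) = 0 := by
      rw [← hrepφ a ha, ← hrepφ b hb', ← hrepφ c hc']
      exact hF2 (-φ a) (-φ b) (-φ c) α
    rw [hFz, hBξ2 a α, hBξ2 b α, heW a ha, heW b hb']
    ring
  have s1 : ∀ α (b c d : V), (∀ γ, η γ b = 0) → (∀ γ, η γ c = 0) → (∀ γ, η γ d = 0) →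
      Hm (ξ α) b c d = 0 := by
    intro α b c d hb' hc' hd'
    rw [hmpair, hmanti2, u4 c d b α hc' hd' hb', neg_zero]
  have s2 : ∀ (a : V) α (c d : V), (∀ γ, η γ a = 0) → (∀ γ, η γ c = 0) → (∀ γ, η γ d = 0) →
      Hm a (ξ α) c d = 0 := by
    intro a α c d ha hc' hd'
    rw [hmanti1, s1 α a c d ha hc' hd', neg_zero]
  have s3 : ∀ (a b : V) α (d : V), (∀ γ, η γ a = 0) → (∀ γ, η γ b = 0) → (∀ γ, η γ d = 0) →
      Hm a b (ξ α) d = 0 := by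
    intro a b α d ha hb' hd'
    rw [hmanti2, u4 a b d α ha hb' hd', neg_zero]
  -- positive definiteness on W
  have hposW : ∀ x : V, (∀ γ, η γ x = 0) → x ≠ 0 → 0 < g x x := by
    obtain ⟨n, b, hbb⟩ := hgL
    intro x hx hx0
    refine lorentz_posdef g b hbb (ξ 0) x ?_ ?_ hx0
    · rw [hgξξ]; simp [hε0]
    · rw [hgxi, hx 0]; ring
  -- quadratic expansion helpers
  have hHadd13 : ∀ u v y : V, Hm (u + v) y (u + v) y
      = Hm u y u y + Hm u y v y + Hm v y u y + Hm v y v y := by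
    intro u v y
    simp only [hHm, hG, map_add, LinearMap.add_apply, hBadd1, hBadd2]
    ring
  have hHadd24 : ∀ x y z w : V, Hm x (y + w) z (y + w)
      = Hm x y z y + Hm x y z w + Hm x w z y + Hm x w z w := by
    intro x y z w
    simp only [hHm, hG, map_add, LinearMap.add_apply, hBadd1, hBadd2]
    ring
  have hdiag12 : ∀ p z w : V, Hm p p z w = 0 := by
    intro p z w
    have := hmanti1 p p z w
    linarith
  have hdiag34 : ∀ z w p : V, Hm z w p p = 0 := by
    intro z w p
    have := hmanti2 z w p p
    linarith
  constructor
  · -- forward direction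
    intro ha
    -- the key sectional vanishing on W for unit orthogonal pairs
    have hkey : ∀ x : V, (∀ γ, η γ x = 0) → g x x = 1 →
        ∀ y : V, (∀ γ, η γ y = 0) → g x y = 0 → Hm x y x y = 0 := by
      intro x hx hxx y hy hxy
      have hortho : g (ξ 0 + x) y = 0 := by
        rw [map_add, LinearMap.add_apply, hgξR 0 y, hy 0, hxy]
        ring
      have h0 := ha x hx hxx y hortho hy
      have hGz : G (ξ 0 + x) y (ξ 0 + x) y = 0 := by
        have hBuy : B (ξ 0 + x) y = 0 := by
          rw [hBadd1, hBξ1 0 y, heW y hy, hBgW x y hx, hxy]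
          ring
        have hByu : B y (ξ 0 + x) = 0 := by rw [hBsymm]; exact hBuy
        have hBuu : B (ξ 0 + x) (ξ 0 + x) = 0 := by
          rw [hBadd1, hBadd2, hBadd2, hBξ2 (ξ 0) 0, hBξ1 0 x, hBξ2 x 0, heξ 0,
            heW x hx, hBgW x x hx, hxx, hε0]
          ring
        simp only [hG, hBuy, hByu, hBuu]
        ring
      have hHuy : Hm (ξ 0 + x) y (ξ 0 + x) y = 0 := by
        simp only [hHm]
        rw [h0, hGz]
        ring
      rw [hHadd13] at hHuy
      rw [t13 0 y 0 y, s1 0 y x y hy hx hy, s3 x y 0 y hx hy hy] at hHuy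
      linarith
    -- sectional vanishing for all pairs in W
    have hWsec : ∀ x y : V, (∀ γ, η γ x = 0) → (∀ γ, η γ y = 0) → Hm x y x y = 0 := by
      intro x y hx hy
      by_cases hx0 : x = 0
      · subst hx0
        simp only [hHm, hG, hB, map_zero, LinearMap.zero_apply, LinearMap.map_zero]
        ring
      · have ht := hposW x hx hx0
        set r := Real.sqrt (g x x) with hr_def
        have hr : r * r = g x x := Real.mul_self_sqrt ht.le
        have hrpos : 0 < r := Real.sqrt_pos.mpr ht
        set x' := (1/r) • x with hx'_def
        have hx'W : ∀ γ, η γ x' = 0 := by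
          intro γ; rw [hx'_def, map_smul, hx γ, smul_zero]
        have hx'x' : g x' x' = 1 := by
          rw [hx'_def]
          simp only [map_smul, LinearMap.smul_apply, smul_eq_mul]
          rw [← hr]
          field_simp
        set cc := g x' y with hcc_def
        set y' := y - cc • x' with hy'_def
        have hy'W : ∀ γ, η γ y' = 0 := by
          intro γ
          rw [hy'_def, map_sub, map_smul, hy γ, hx'W γ, smul_zero, sub_zero]
        have hxy' : g x' y' = 0 := by
          have hstep : g x' y' = g x' y - cc * g x' x' := by
            rw [hy'_def]
            simp only [map_sub, map_smul, smul_eq_mul]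
          rw [hstep, hx'x', ← hcc_def]
          ring
        have h1 : Hm x' y' x' y' = 0 := hkey x' hx'W hx'x' y' hy'W hxy'
        have h2 : Hm x' y x' y = 0 := by
          have hdecy : y = y' + cc • x' := by rw [hy'_def]; abel
          have hq : Hm x' (y' + cc • x') x' (y' + cc • x')
              = Hm x' y' x' y' + cc * Hm x' y' x' x' + cc * Hm x' x' x' y'
                + cc * cc * Hm x' x' x' x' := by
            simp only [hHm, hG, map_add, LinearMap.add_apply, map_smul,
              LinearMap.smul_apply, smul_eq_mul, hBadd1, hBadd2, hBsmul1, hBsmul2]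
            ring
          rw [← hdecy] at hq
          rw [h1, hdiag34 x' y' x', hdiag12 x' x' y', hdiag12 x' x' x'] at hq
          rw [hq]; ring
        have hxr : x = r • x' := by
          rw [hx'_def, smul_smul, mul_one_div, div_self hrpos.ne', one_smul]
        have hsc : Hm (r • x') y (r • x') y = r * (r * Hm x' y x' y) := by
          simp only [hHm, hG, map_smul, LinearMap.smul_apply, smul_eq_mul, hBsmul1, hBsmul2]
          ring
        rw [hxr, hsc, h2]
        ring
    -- polarization: Hm vanishes identically on W
    have hWadd : ∀ x z : V, (∀ γ, η γ x = 0) → (∀ γ, η γ z = 0) → ∀ γ, η γ (x + z) = 0 := by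
      intro x z hx hz γ
      rw [map_add, hx γ, hz γ, add_zero]
    have hP0 : ∀ x y z : V, (∀ γ, η γ x = 0) → (∀ γ, η γ y = 0) → (∀ γ, η γ z = 0) →
        Hm x y z y = 0 := by
      intro x y z hx hy hz
      have h1 := hWsec (x + z) y (hWadd x z hx hz) hy
      rw [hHadd13, hWsec x y hx hy, hWsec z y hz hy] at h1
      have h2 := hmpair z y x y
      linarith
    have hP1 : ∀ x y z w : V, (∀ γ, η γ x = 0) → (∀ γ, η γ y = 0) → (∀ γ, η γ z = 0) →
        (∀ γ, η γ w = 0) → Hm x y z w + Hm x w z y = 0 := by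
      intro x y z w hx hy hz hw
      have h1 := hP0 x (y + w) z hx (hWadd y w hy hw) hz
      rw [hHadd24, hP0 x y z hx hy hz, hP0 x w z hx hw hz] at h1
      linarith
    have hrot : ∀ x y z w : V, (∀ γ, η γ x = 0) → (∀ γ, η γ y = 0) → (∀ γ, η γ z = 0) →
        (∀ γ, η γ w = 0) → Hm y z x w = Hm z x y w := by
      intro x y z w hx hy hz hw
      have h1 := hmpair y z x w
      have h2 := hP1 x w y z hx hw hy hz
      have h3 := hmanti1 x z y w
      linarith
    have hWall : ∀ x y z w : V, (∀ γ, η γ x = 0) → (∀ γ, η γ y = 0) → (∀ γ, η γ z = 0) →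
        (∀ γ, η γ w = 0) → Hm x y z w = 0 := by
      intro x y z w hx hy hz hw
      have hb1 := hmbianchi x y z w
      have e1 := hrot z x y w hz hx hy hw
      have e2 := hrot x y z w hx hy hz hw
      linarith
    -- peeling: Hm vanishes everywhere
    have hWw : ∀ v : V, ∀ γ, η γ (-φ (φ v)) = 0 := by
      intro v γ
      rw [map_neg, hηφ, neg_zero]
    have g4 : ∀ a b c : V, (∀ γ, η γ a = 0) → (∀ γ, η γ b = 0) → (∀ γ, η γ c = 0) →
        ∀ d : V, Hm a b c d = 0 := by
      intro a b c ha hb' hc' d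
      rw [hexp4 a b c d, hWall a b c _ ha hb' hc' (hWw d)]
      have hs : ∑ γ, η γ d * Hm a b c (ξ γ) = 0 :=
        Finset.sum_eq_zero fun γ _ => by rw [u4 a b c γ ha hb' hc', mul_zero]
      rw [hs]; ring
    have z3 : ∀ a b : V, (∀ γ, η γ a = 0) → (∀ γ, η γ b = 0) → ∀ γ (d : V),
        Hm a b (ξ γ) d = 0 := by
      intro a b ha hb' γ d
      rw [hexp4 a b (ξ γ) d, s3 a b γ _ ha hb' (hWw d)]
      have hs : ∑ δ, η δ d * Hm a b (ξ γ) (ξ δ) = 0 :=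
        Finset.sum_eq_zero fun δ _ => by rw [t34 a b γ δ, mul_zero]
      rw [hs]; ring
    have g3 : ∀ a b : V, (∀ γ, η γ a = 0) → (∀ γ, η γ b = 0) → ∀ c d : V,
        Hm a b c d = 0 := by
      intro a b ha hb' c d
      rw [hexp3 a b c d, g4 a b _ ha hb' (hWw c) d]
      have hs : ∑ γ, η γ c * Hm a b (ξ γ) d = 0 :=
        Finset.sum_eq_zero fun γ _ => by rw [z3 a b ha hb' γ d, mul_zero]
      rw [hs]; ring
    have z2' : ∀ a c : V, (∀ γ, η γ a = 0) → (∀ γ, η γ c = 0) → ∀ β (d : V),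
        Hm a (ξ β) c d = 0 := by
      intro a c ha hc' β d
      rw [hexp4 a (ξ β) c d, s2 a β c _ ha hc' (hWw d)]
      have hs : ∑ δ, η δ d * Hm a (ξ β) c (ξ δ) = 0 :=
        Finset.sum_eq_zero fun δ _ => by rw [t24 a c β δ, mul_zero]
      rw [hs]; ring
    have z2 : ∀ a : V, (∀ γ, η γ a = 0) → ∀ β (c d : V), Hm a (ξ β) c d = 0 := by
      intro a ha β c d
      rw [hexp3 a (ξ β) c d, z2' a _ ha (hWw c) β d]
      have hs : ∑ γ, η γ c * Hm a (ξ β) (ξ γ) d = 0 :=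
        Finset.sum_eq_zero fun γ _ => by rw [t23 a β γ d, mul_zero]
      rw [hs]; ring
    have g2 : ∀ a : V, (∀ γ, η γ a = 0) → ∀ b c d : V, Hm a b c d = 0 := by
      intro a ha b c d
      rw [hexp2 a b c d, g3 a _ ha (hWw b) c d]
      have hs : ∑ γ, η γ b * Hm a (ξ γ) c d = 0 :=
        Finset.sum_eq_zero fun γ _ => by rw [z2 a ha γ c d, mul_zero]
      rw [hs]; ring
    have z1'' : ∀ (b c : V), (∀ γ, η γ b = 0) → (∀ γ, η γ c = 0) → ∀ α (d : V),
        Hm (ξ α) b c d = 0 := by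
      intro b c hb' hc' α d
      rw [hexp4 (ξ α) b c d, s1 α b c _ hb' hc' (hWw d)]
      have hs : ∑ δ, η δ d * Hm (ξ α) b c (ξ δ) = 0 :=
        Finset.sum_eq_zero fun δ _ => by rw [t14 α b c δ, mul_zero]
      rw [hs]; ring
    have z1' : ∀ (b : V), (∀ γ, η γ b = 0) → ∀ α (c d : V), Hm (ξ α) b c d = 0 := by
      intro b hb' α c d
      rw [hexp3 (ξ α) b c d, z1'' b _ hb' (hWw c) α d]
      have hs : ∑ γ, η γ c * Hm (ξ α) b (ξ γ) d = 0 :=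
        Finset.sum_eq_zero fun γ _ => by rw [t13 α b γ d, mul_zero]
      rw [hs]; ring
    have z1 : ∀ α (b c d : V), Hm (ξ α) b c d = 0 := by
      intro α b c d
      rw [hexp2 (ξ α) b c d, z1' _ (hWw b) α c d]
      have hs : ∑ γ, η γ b * Hm (ξ α) (ξ γ) c d = 0 :=
        Finset.sum_eq_zero fun γ _ => by rw [t12 α γ c d, mul_zero]
      rw [hs]; ring
    have g1 : ∀ a b c d : V, Hm a b c d = 0 := by
      intro a b c d
      rw [hexp1 a b c d, g2 _ (hWw a) b c d]
      have hs : ∑ γ, η γ a * Hm (ξ γ) b c d = 0 :=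
        Finset.sum_eq_zero fun γ _ => by rw [z1 γ b c d, mul_zero]
      rw [hs]; ring
    -- conclude
    intro x y z w
    rw [hRHS x y z w]
    have h := g1 x y z w
    simp only [hHm] at h
    linarith
  · -- backward direction
    intro hb' x hx hxx y hortho hy
    rw [hb' (ξ 0 + x) y (ξ 0 + x) y, hRHS]
    have hgxy : g x y = 0 := by
      have h := hortho
      rw [map_add, LinearMap.add_apply, hgξR 0 y, hy 0] at h
      linarith [h]
    have hBuy : B (ξ 0 + x) y = 0 := by
      rw [hBadd1, hBξ1 0 y, heW y hy, hBgW x y hx, hgxy]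
      ring
    have hByu : B y (ξ 0 + x) = 0 := by rw [hBsymm]; exact hBuy
    have hBuu : B (ξ 0 + x) (ξ 0 + x) = 0 := by
      rw [hBadd1, hBadd2, hBadd2, hBξ2 (ξ 0) 0, hBξ1 0 x, hBξ2 x 0, heξ 0,
        heW x hx, hBgW x x hx, hxx, hε0]
      ring
    simp only [hG, hBuy, hByu, hBuu]
    ring
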